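/- For all u ≤ w in factor order on A*, the Möbius function satisfies μ(u,w) ∈ {−1, 0, 1}. -/

import Mathlib

/-- All contiguous subwords (factors) of a word, including the empty word. -/
def factors {A : Type*} (w : List A) : List (List A) := w.inits.flatMap List.tails

/-- The closed interval `[u,w]` in factor order, as a `Finset`. -/
def factorInterval {A : Type*} [DecidableEq A] (u w : List A) : Finset (List A) :=
  (factors w).toFinset.filter (fun z => u <:+: z)

/-- A word is flat if all of its letters are equal. -/
def Flat {A : Type*} (w : List A) : Prop := ∀ x ∈ w, ∀ y ∈ w, x = y

/-- Length of the longest proper prefix of `w` that is also a suffix of `w`. -/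
def outerLen {A : Type*} [DecidableEq A] (w : List A) : ℕ :=
  Nat.findGreatest (fun k => w.take k = w.drop (w.length - k)) (w.length - 1)

/-- The outer word `o(w)`: the longest word (possibly empty) that is both a proper
prefix and a suffix of `w`. -/
def outerWord {A : Type*} [DecidableEq A] (w : List A) : List A := w.take (outerLen w)

/-- The inner word `i(w) = w(2)…w(n−1)`. -/
def innerWord {A : Type*} (w : List A) : List A := w.tail.dropLast

section Aux
set_option linter.unusedSectionVars false

variable {A : Type*} [DecidableEq A]

lemma mem_factors {w z : List A} : z ∈ factors w ↔ z <:+: w := by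
  simp only [factors, List.mem_flatMap, List.mem_inits, List.mem_tails]
  constructor
  · rintro ⟨p, hp, hz⟩
    exact hz.isInfix.trans hp.isInfix
  · rintro ⟨s, t, hst⟩
    exact ⟨s ++ z, ⟨t, by simpa using hst⟩, ⟨s, rfl⟩⟩

lemma mem_factorInterval {u w z : List A} :
    z ∈ factorInterval u w ↔ z <:+: w ∧ u <:+: z := by
  simp [factorInterval, mem_factors]

lemma infix_antisymm {u v : List A} (h1 : u <:+: v) (h2 : v <:+: u) : u = v :=
  h1.sublist.antisymm h2.sublist

lemma infix_ne_length_lt {u v : List A} (h : u <:+: v) (hne : u ≠ v) :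
    u.length < v.length :=
  lt_of_le_of_ne h.length_le (fun he => hne (h.sublist.eq_of_length he))

lemma factorInterval_self (u : List A) : factorInterval u u = {u} := by
  ext z
  simp only [mem_factorInterval, Finset.mem_singleton]
  exact ⟨fun ⟨h1, h2⟩ => infix_antisymm h1 h2 ▸ rfl, by rintro rfl; exact ⟨List.infix_refl _, List.infix_refl _⟩⟩

/-! ### Outer word lemmas -/

lemma outerLen_le (w : List A) : outerLen w ≤ w.length - 1 := Nat.findGreatest_le _

lemma outer_take_drop (w : List A) :
    w.take (outerLen w) = w.drop (w.length - outerLen w) :=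
  Nat.findGreatest_spec (P := fun k => w.take k = w.drop (w.length - k))
    (n := w.length - 1) (Nat.zero_le _) (by simp)

lemma outerWord_length (w : List A) : (outerWord w).length = outerLen w := by
  rw [outerWord, List.length_take]
  exact min_eq_left ((outerLen_le w).trans (Nat.sub_le _ _))

lemma outerWord_prefix (w : List A) : outerWord w <+: w := List.take_prefix _ _

lemma outerWord_suffix (w : List A) : outerWord w <:+ w := by
  rw [outerWord, outer_take_drop]; exact List.drop_suffix _ _

lemma border_prefix_outer {w z : List A} (h1 : z <+: w) (h2 : z <:+ w)
    (h3 : z.length ≤ w.length - 1) : z <+: outerWord w := by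
  have hm : z.length ≤ outerLen w := by
    refine Nat.le_findGreatest h3 ?_
    rw [← List.prefix_iff_eq_take.mp h1, ← List.suffix_iff_eq_drop.mp h2]
  have he : List.take z.length w = List.take z.length (List.take (outerLen w) w) := by
    rw [List.take_take, min_eq_left hm]
  rw [outerWord, List.prefix_iff_eq_take.mp h1, he]
  exact List.take_prefix _ _

lemma tail_dropLast_comm (l : List A) : l.dropLast.tail = l.tail.dropLast := by
  rw [List.dropLast_eq_take, List.dropLast_eq_take, ← List.drop_one, ← List.drop_one,
    List.drop_take, List.length_drop]

lemma prefix_tail_mono {a b : List A} (h : a <+: b) : a.tail <+: b.tail := by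
  obtain ⟨c, rfl⟩ := h
  cases a with
  | nil => exact List.nil_prefix
  | cons x a' => exact ⟨c, rfl⟩

lemma suffix_dropLast_mono {a b : List A} (h : a <:+ b) : a.dropLast <:+ b.dropLast := by
  obtain ⟨c, rfl⟩ := h
  rcases eq_or_ne a [] with rfl | ha
  · simp
  · rw [List.dropLast_append_of_ne_nil ha]
    exact ⟨c, rfl⟩

lemma inner_infix_dropLast (w : List A) : innerWord w <:+: w.dropLast := by
  rw [innerWord, ← tail_dropLast_comm]
  exact (List.tail_suffix _).isInfix

lemma inner_infix_tail (w : List A) : innerWord w <:+: w.tail :=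
  (List.dropLast_prefix _).isInfix

lemma outer_prefix_dropLast (w : List A) : outerWord w <+: w.dropLast := by
  rw [outerWord, List.dropLast_eq_take]
  have he : List.take (outerLen w) w = List.take (outerLen w) (List.take (w.length - 1) w) := by
    rw [List.take_take, min_eq_left (outerLen_le w)]
  rw [he]
  exact List.take_prefix _ _

lemma outer_suffix_tail {w : List A} (hw : w ≠ []) : outerWord w <:+ w.tail := by
  have h1 : 1 ≤ w.length := List.length_pos_iff.mpr hw
  have h2 : outerLen w ≤ w.length - 1 := outerLen_le w
  rw [outerWord, outer_take_drop, show w.length - outerLen w = 1 + (w.length - outerLen w - 1) by omega,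
    ← List.drop_drop, List.drop_one]
  exact List.drop_suffix _ _

/-- Every factor of the outer word other than itself is a factor of the inner word. -/
lemma infix_inner_of_infix_outer_ne {w z : List A} (hz : z <:+: outerWord w)
    (hne : z ≠ outerWord w) : z <:+: innerWord w := by
  obtain ⟨s, t, hst⟩ := hz
  rcases eq_or_ne s [] with rfl | hs
  · rcases eq_or_ne t [] with rfl | ht
    · simp at hst; exact absurd hst hne
    · have how : outerWord w ≠ [] := by
        rw [← hst]; simp [ht]
      have hw : w ≠ [] := by
        rintro rfl
        exact how (by simp [outerWord])
      have h1 : z <+: (outerWord w).dropLast := by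
        rw [← hst, List.nil_append, List.dropLast_append_of_ne_nil ht]
        exact ⟨t.dropLast, rfl⟩
      have h2 : (outerWord w).dropLast <:+ w.tail.dropLast :=
        suffix_dropLast_mono (outer_suffix_tail hw)
      exact (h1.isInfix.trans h2.isInfix)
  · have h1 : z <:+: (outerWord w).tail := by
      rw [← hst]
      cases s with
      | nil => exact absurd rfl hs
      | cons x s' => exact ⟨s', t, by simp⟩
    have h2 : (outerWord w).tail <+: w.dropLast.tail :=
      prefix_tail_mono (outer_prefix_dropLast w)
    have h3 : w.dropLast.tail = innerWord w := tail_dropLast_comm w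
    exact h1.trans (h3 ▸ h2.isInfix)

/-- A proper factor of `w` is a factor of `w.dropLast` or of `w.tail`, and conversely. -/
lemma infix_proper_iff {w z : List A} (hw : w ≠ []) :
    (z <:+: w ∧ z ≠ w) ↔ (z <:+: w.dropLast ∨ z <:+: w.tail) := by
  have hlen : 1 ≤ w.length := List.length_pos_iff.mpr hw
  constructor
  · rintro ⟨⟨s, t, hst⟩, hne⟩
    rcases eq_or_ne t [] with rfl | ht
    · rcases eq_or_ne s [] with rfl | hs
      · simp at hst; exact absurd hst hne
      · right
        rw [← hst]
        cases s with
        | nil => exact absurd rfl hs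
        | cons x s' => exact ⟨s', [], by simp⟩
    · left
      refine ⟨s, t.dropLast, ?_⟩
      rw [← hst, List.dropLast_append_of_ne_nil ht]
  · rintro (h | h)
    · refine ⟨h.trans (List.dropLast_prefix w).isInfix, fun he => ?_⟩
      have := h.length_le
      rw [he, List.length_dropLast] at this
      omega
    · refine ⟨h.trans (List.tail_suffix w).isInfix, fun he => ?_⟩
      have := h.length_le
      rw [he, List.length_tail] at this
      omega

/-- Common factors of `w.dropLast` and `w.tail` are exactly the factors of the
inner word or of the outer word. -/
lemma infix_dropLast_tail_iff {w z : List A} (hw : w ≠ []) :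
    (z <:+: w.dropLast ∧ z <:+: w.tail) ↔ (z <:+: innerWord w ∨ z <:+: outerWord w) := by
  constructor
  · rintro ⟨⟨s1, t1, h1⟩, ⟨s2, t2, h2⟩⟩
    rcases eq_or_ne s1 [] with rfl | hs
    · rcases eq_or_ne t2 [] with rfl | ht
      · right
        refine (border_prefix_outer ?_ ?_ ?_).isInfix
        · -- z is a prefix of w
          have hp : z <+: w.dropLast := ⟨t1, by simpa using h1⟩
          exact hp.trans (List.dropLast_prefix w)
        · have hsuf : z <:+ w.tail := ⟨s2, by simpa using h2⟩
          exact hsuf.trans (List.tail_suffix w)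
        · have : z.length ≤ w.dropLast.length :=
            List.IsPrefix.length_le ⟨t1, by simpa using h1⟩
          rwa [List.length_dropLast] at this
      · left
        rw [innerWord, ← h2, List.dropLast_append_of_ne_nil ht]
        exact ⟨s2, t2.dropLast, by simp⟩
    · left
      have h1' : z <:+: w.dropLast.tail := by
        rw [← h1]
        cases s1 with
        | nil => exact absurd rfl hs
        | cons x s' => exact ⟨s', t1, by simp⟩
      rwa [tail_dropLast_comm] at h1'
  · rintro (h | h)
    · exact ⟨h.trans (inner_infix_dropLast w), h.trans (inner_infix_tail w)⟩
    · exact ⟨h.trans (outer_prefix_dropLast w).isInfix, h.trans (outer_suffix_tail hw).isInfix⟩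

/-! ### The master identity -/

variable (μ : List A → List A → ℤ)
variable (hμ : ∀ u w : List A, u <:+: w →
      ∑ z ∈ factorInterval u w, μ u z = if u = w then 1 else 0)

include hμ

lemma sumI (u v : List A) :
    ∑ z ∈ factorInterval u v, μ u z = if u = v then 1 else 0 := by
  by_cases h : u <:+: v
  · exact hμ u v h
  · have he : factorInterval u v = ∅ := by
      ext z
      simp only [mem_factorInterval, Finset.notMem_empty, iff_false, not_and]
      intro hz hu
      exact absurd (hu.trans hz) h
    rw [he, Finset.sum_empty, if_neg]
    rintro rfl
    exact h (List.infix_refl _)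

lemma mu_refl (u : List A) : μ u u = 1 := by
  have := hμ u u (List.infix_refl u)
  rwa [factorInterval_self, Finset.sum_singleton, if_pos rfl] at this

lemma master {u w : List A} (h : u <:+: w) (hne : u ≠ w) :
    μ u w = (if u = innerWord w then 1 else 0) - (if u = w.dropLast then 1 else 0)
      - (if u = w.tail then 1 else 0)
      + (if (¬ outerWord w <:+: innerWord w) ∧ u <:+: outerWord w
          then μ u (outerWord w) else 0) := by
  have hw : w ≠ [] := by
    rintro rfl
    exact hne (List.eq_nil_of_infix_nil h)
  have h0 : ∑ z ∈ factorInterval u w, μ u z = 0 := by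
    rw [hμ u w h, if_neg hne]
  have hsplit : factorInterval u w =
      insert w (factorInterval u w.dropLast ∪ factorInterval u w.tail) := by
    ext z
    simp only [mem_factorInterval, Finset.mem_insert, Finset.mem_union]
    constructor
    · rintro ⟨hzw, huz⟩
      rcases eq_or_ne z w with rfl | hzne
      · exact Or.inl rfl
      · rcases (infix_proper_iff hw).mp ⟨hzw, hzne⟩ with h1 | h1
        · exact Or.inr (Or.inl ⟨h1, huz⟩)
        · exact Or.inr (Or.inr ⟨h1, huz⟩)
    · rintro (rfl | ⟨h1, h2⟩ | ⟨h1, h2⟩)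
      · exact ⟨List.infix_refl _, h⟩
      · exact ⟨((infix_proper_iff hw).mpr (Or.inl h1)).1, h2⟩
      · exact ⟨((infix_proper_iff hw).mpr (Or.inr h1)).1, h2⟩
  have hwnot : w ∉ factorInterval u w.dropLast ∪ factorInterval u w.tail := by
    simp only [Finset.mem_union, mem_factorInterval, not_or, not_and]
    constructor
    · intro hc _
      have := hc.length_le
      rw [List.length_dropLast] at this
      have : 1 ≤ w.length := List.length_pos_iff.mpr hw
      omega
    · intro hc _
      have := hc.length_le
      rw [List.length_tail] at this
      have : 1 ≤ w.length := List.length_pos_iff.mpr hw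
      omega
  rw [hsplit, Finset.sum_insert hwnot] at h0
  have hIE1 : ∑ z ∈ factorInterval u w.dropLast ∪ factorInterval u w.tail, μ u z
      + ∑ z ∈ factorInterval u w.dropLast ∩ factorInterval u w.tail, μ u z
      = ∑ z ∈ factorInterval u w.dropLast, μ u z + ∑ z ∈ factorInterval u w.tail, μ u z :=
    Finset.sum_union_inter
  have hinter : factorInterval u w.dropLast ∩ factorInterval u w.tail =
      factorInterval u (innerWord w) ∪ factorInterval u (outerWord w) := by
    ext z
    simp only [Finset.mem_inter, Finset.mem_union, mem_factorInterval]
    constructor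
    · rintro ⟨⟨h1, h2⟩, ⟨h3, _⟩⟩
      rcases (infix_dropLast_tail_iff hw).mp ⟨h1, h3⟩ with h4 | h4
      · exact Or.inl ⟨h4, h2⟩
      · exact Or.inr ⟨h4, h2⟩
    · rintro (⟨h1, h2⟩ | ⟨h1, h2⟩)
      · have := (infix_dropLast_tail_iff hw).mpr (Or.inl h1)
        exact ⟨⟨this.1, h2⟩, ⟨this.2, h2⟩⟩
      · have := (infix_dropLast_tail_iff hw).mpr (Or.inr h1)
        exact ⟨⟨this.1, h2⟩, ⟨this.2, h2⟩⟩
  have hIE2 : ∑ z ∈ factorInterval u (innerWord w) ∪ factorInterval u (outerWord w), μ u z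
      + ∑ z ∈ factorInterval u (innerWord w) ∩ factorInterval u (outerWord w), μ u z
      = ∑ z ∈ factorInterval u (innerWord w), μ u z
        + ∑ z ∈ factorInterval u (outerWord w), μ u z :=
    Finset.sum_union_inter
  have hd := sumI μ hμ u w.dropLast
  have ht := sumI μ hμ u w.tail
  have hi := sumI μ hμ u (innerWord w)
  have ho := sumI μ hμ u (outerWord w)
  by_cases hoi : outerWord w <:+: innerWord w
  · -- then factors of outer ⊆ factors of inner
    have hio : factorInterval u (innerWord w) ∩ factorInterval u (outerWord w) =
        factorInterval u (outerWord w) := by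
      apply Finset.inter_eq_right.mpr
      intro z hz
      rw [mem_factorInterval] at hz ⊢
      exact ⟨hz.1.trans hoi, hz.2⟩
    rw [hio] at hIE2
    rw [if_neg (show ¬((¬ outerWord w <:+: innerWord w) ∧ u <:+: outerWord w) from
      fun hc => hc.1 hoi)]
    rw [hinter] at hIE1
    linarith
  · by_cases huo : u <:+: outerWord w
    · have homem : outerWord w ∈ factorInterval u (outerWord w) := by
        rw [mem_factorInterval]; exact ⟨List.infix_refl _, huo⟩
      have hio : factorInterval u (innerWord w) ∩ factorInterval u (outerWord w) =
          (factorInterval u (outerWord w)).erase (outerWord w) := by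
        ext z
        simp only [Finset.mem_inter, Finset.mem_erase, mem_factorInterval]
        constructor
        · rintro ⟨⟨h1, h2⟩, ⟨h3, _⟩⟩
          refine ⟨fun he => hoi (he ▸ h1), h3, h2⟩
        · rintro ⟨h1, h2, h3⟩
          exact ⟨⟨infix_inner_of_infix_outer_ne h2 h1, h3⟩, ⟨h2, h3⟩⟩
      have herase : ∑ z ∈ (factorInterval u (outerWord w)).erase (outerWord w), μ u z =
          ∑ z ∈ factorInterval u (outerWord w), μ u z - μ u (outerWord w) :=
        Finset.sum_erase_eq_sub homem
      rw [hio, herase] at hIE2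
      rw [if_pos (show (¬ outerWord w <:+: innerWord w) ∧ u <:+: outerWord w from ⟨hoi, huo⟩)]
      rw [hinter] at hIE1
      linarith
    · have hio : factorInterval u (innerWord w) ∩ factorInterval u (outerWord w) =
          factorInterval u (outerWord w) := by
        have : factorInterval u (outerWord w) = ∅ := by
          ext z
          simp only [mem_factorInterval, Finset.notMem_empty, iff_false, not_and]
          intro hz hu2
          exact absurd (hu2.trans hz) huo
        rw [this]
        exact Finset.inter_empty _
      rw [hio] at hIE2
      rw [if_neg (show ¬((¬ outerWord w <:+: innerWord w) ∧ u <:+: outerWord w) from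
        fun hc => huo hc.2)]
      rw [hinter] at hIE1
      linarith

omit hμ

end Aux

/-- The Möbius function of factor order only takes the values −1, 0, 1. -/
theorem mobius_factor_order_values {A : Type*} [DecidableEq A]
    (μ : List A → List A → ℤ)
    (hμ : ∀ u w : List A, u <:+: w →
      ∑ z ∈ factorInterval u w, μ u z = if u = w then 1 else 0) :
    ∀ u w : List A, u <:+: w → μ u w = -1 ∨ μ u w = 0 ∨ μ u w = 1 := by
  suffices H : ∀ n : ℕ, ∀ w : List A, w.length = n → ∀ u : List A, u <:+: w →
      ((μ u w = -1 ∨ μ u w = 0 ∨ μ u w = 1) ∧ (u.length + 1 = w.length → μ u w = -1)) by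
    intro u w h
    exact (H w.length w rfl u h).1
  intro n
  induction n using Nat.strong_induction_on with
  | _ n IH =>
    intro w hn u hu
    rcases eq_or_ne u w with rfl | hne
    · rw [mu_refl μ hμ]
      exact ⟨Or.inr (Or.inr rfl), fun habs => by omega⟩
    have hw : w ≠ [] := by
      rintro rfl
      exact hne (List.eq_nil_of_infix_nil hu)
    have hwpos : 1 ≤ w.length := List.length_pos_iff.mpr hw
    have hlen : u.length < w.length := infix_ne_length_lt hu hne
    have hm := master μ hμ hu hne
    have hdl : w.dropLast.length = w.length - 1 := List.length_dropLast
    have htl : w.tail.length = w.length - 1 := List.length_tail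
    have hil : (innerWord w).length = w.length - 1 - 1 := by
      rw [innerWord, List.length_dropLast, List.length_tail]
    have hol : (outerWord w).length ≤ w.length - 1 := by
      rw [outerWord_length]; exact outerLen_le w
    -- helper to kill δ-terms by length
    by_cases hc1 : u.length + 2 < w.length
    · -- all δ-terms vanish
      rw [if_neg (show u ≠ innerWord w from fun he => by rw [he, hil] at hc1; omega),
          if_neg (show u ≠ w.dropLast from fun he => by rw [he, hdl] at hc1; omega),
          if_neg (show u ≠ w.tail from fun he => by rw [he, htl] at hc1; omega)] at hm
      by_cases hcond : (¬ outerWord w <:+: innerWord w) ∧ u <:+: outerWord w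
      · rw [if_pos hcond] at hm
        have hko : (outerWord w).length < n := by omega
        have := (IH (outerWord w).length (by omega) (outerWord w) rfl u hcond.2).1
        constructor
        · rcases this with h | h | h <;> omega
        · intro habs; omega
      · rw [if_neg hcond] at hm
        exact ⟨Or.inr (Or.inl (by omega)), fun habs => by omega⟩
    · by_cases hc2 : u.length + 2 = w.length
      · rw [if_neg (show u ≠ w.dropLast from fun he => by rw [he, hdl] at hc2; omega),
            if_neg (show u ≠ w.tail from fun he => by rw [he, htl] at hc2; omega)] at hm
        by_cases hcond : (¬ outerWord w <:+: innerWord w) ∧ u <:+: outerWord w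
        · rw [if_pos hcond] at hm
          rcases eq_or_ne u (outerWord w) with heq | hne2
          · -- μ u o = 1, and u ≠ i
            rw [← heq, mu_refl μ hμ] at hm
            rw [if_neg (show u ≠ innerWord w from
              fun he => hcond.1 (show outerWord w <:+: innerWord w by
                rw [← heq, ← he]))] at hm
            exact ⟨Or.inr (Or.inr (by omega)), fun habs => by omega⟩
          · have hlt : u.length < (outerWord w).length := infix_ne_length_lt hcond.2 hne2
            have holen : (outerWord w).length = u.length + 1 := by omega
            have := (IH (outerWord w).length (by omega) (outerWord w) rfl u hcond.2).2 (by omega)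
            rw [this] at hm
            constructor
            · by_cases hei : u = innerWord w
              · rw [if_pos hei] at hm; exact Or.inr (Or.inl (by omega))
              · rw [if_neg hei] at hm; exact Or.inl (by omega)
            · intro habs; omega
        · rw [if_neg hcond] at hm
          constructor
          · by_cases hei : u = innerWord w
            · rw [if_pos hei] at hm; exact Or.inr (Or.inr (by omega))
            · rw [if_neg hei] at hm; exact Or.inr (Or.inl (by omega))
          · intro habs; omega
      · -- u.length + 1 = w.length
        have hc3 : u.length + 1 = w.length := by omega
        rcases eq_or_ne w.length 1 with h1 | h1
        · -- w is a single letter, u = []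
          have hu0 : u = [] := List.eq_nil_of_length_eq_zero (by omega)
          have hti : w.tail = [] := List.eq_nil_of_length_eq_zero (by omega)
          have hdi : w.dropLast = [] := List.eq_nil_of_length_eq_zero (by omega)
          have hii : innerWord w = [] := by rw [innerWord, hti]; rfl
          have hoo : outerWord w = [] := List.eq_nil_of_length_eq_zero (by omega)
          rw [hu0, hii, hdi, hti, hoo,
            if_neg (show ¬(¬([] : List A) <:+: ([] : List A) ∧ ([] : List A) <:+: ([] : List A))
              from fun hc => hc.1 (List.infix_refl []))] at hm
          simp at hm
          rw [hu0]
          exact ⟨Or.inl (by omega), fun _ => by omega⟩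
        · -- w.length ≥ 2
          have hw2 : 2 ≤ w.length := by omega
          rw [if_neg (show u ≠ innerWord w from fun he => by rw [he, hil] at hc3; omega)] at hm
          have hudt : u = w.dropLast ∨ u = w.tail := by
            rcases (infix_proper_iff hw).mp ⟨hu, hne⟩ with h | h
            · exact Or.inl (h.sublist.eq_of_length (by omega))
            · exact Or.inr (h.sublist.eq_of_length (by omega))
          have hdtake : w.dropLast = w.take (w.length - 1) := List.dropLast_eq_take
          have httake : w.tail = w.drop 1 := List.drop_one.symm
          by_cases hboth : u = w.dropLast ∧ u = w.tail
          · -- w is "flat-like": full border, so o = u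
            have hP : w.take (w.length - 1) = w.drop (w.length - (w.length - 1)) := by
              rw [show w.length - (w.length - 1) = 1 by omega, ← hdtake, ← httake,
                ← hboth.1, ← hboth.2]
            have hk : outerLen w = w.length - 1 :=
              le_antisymm (outerLen_le w) (Nat.le_findGreatest le_rfl hP)
            have hoe : outerWord w = u := by
              rw [outerWord, hk, ← hdtake, ← hboth.1]
            have hcond : (¬ outerWord w <:+: innerWord w) ∧ u <:+: outerWord w := by
              constructor
              · intro hcon
                have := hcon.length_le
                rw [hoe, hil] at this
                omega
              · rw [hoe]
            rw [if_pos hcond, hoe, mu_refl μ hμ, if_pos hboth.1, if_pos hboth.2] at hm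
            exact ⟨Or.inl (by omega), fun _ => by omega⟩
          · have hcond : ¬ ((¬ outerWord w <:+: innerWord w) ∧ u <:+: outerWord w) := by
              rintro ⟨_, huo⟩
              have heq : u = outerWord w :=
                huo.sublist.eq_of_length (le_antisymm huo.length_le (by omega))
              have hk : outerLen w = w.length - 1 := by
                have := outerWord_length w
                rw [← heq] at this
                omega
              apply hboth
              constructor
              · rw [heq, outerWord, hk, ← hdtake]
              · rw [heq, outerWord, outer_take_drop, hk,
                  show w.length - (w.length - 1) = 1 by omega, ← httake]
            rw [if_neg hcond] at hm
            rcases hudt with he | he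
            · rw [if_pos he, if_neg (fun he2 => hboth ⟨he, he2⟩)] at hm
              exact ⟨Or.inl (by omega), fun _ => by omega⟩
            · rw [if_neg (fun he2 => hboth ⟨he2, he⟩), if_pos he] at hm
              exact ⟨Or.inl (by omega), fun _ => by omega⟩
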